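/- arXiv:2209.12864 — 4 statements merged into one kernel-verified Lean document; each statement's English description precedes it below -/
import Mathlib

section
/- For a squarefree integer d, if the equation d·y² = (x²-x-3)(x²+2x-12) has a solution with x, y ∈ ℚ_p for a prime p dividing d with p ≠ 13, then 13 is a quadratic residue modulo p. -/
/-- For a squarefree integer `d`, if `d·y² = (x²-x-3)(x²+2x-12)` has a solution with
`x, y ∈ ℚ_p` for a prime `p ∣ d` with `p ≠ 13`, then `13` is a quadratic residue mod `p`. -/
theorem stmt6 (d : ℤ) (hd : Squarefree d) (p : ℕ) [Fact p.Prime]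
    (hpd : (p : ℤ) ∣ d) (hp13 : p ≠ 13)
    (h : ∃ x y : ℚ_[p], (d : ℚ_[p]) * y ^ 2 = (x ^ 2 - x - 3) * (x ^ 2 + 2 * x - 12)) :
    IsSquare (13 : ZMod p) := by
  obtain ⟨x, y, hxy⟩ := h
  have hp := Fact.out (p := p.Prime)
  have hp1 : (1:ℝ) < p := by exact_mod_cast hp.one_lt
  have hp0 : (0:ℝ) < p := by positivity
  have hpne1 : (p:ℝ) ≠ 1 := ne_of_gt hp1
  obtain ⟨c, rfl⟩ := hpd
  have hc : ¬ (p:ℤ) ∣ c := by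
    intro hcc
    obtain ⟨e, rfl⟩ := hcc
    exact (Nat.prime_iff_prime_int.mp hp).not_unit (hd (p) ⟨e, by ring⟩)
  have hc0 : c ≠ 0 := by
    rintro rfl
    simp at hd
  have hcn : ‖(c : ℚ_[p])‖ = 1 := by
    have h1 := Padic.norm_int_le_one (p := p) c
    have h2 : ¬ ‖(c:ℚ_[p])‖ < 1 := fun hlt =>
      hc ((Padic.norm_intCast_lt_one_iff (k := c)).mp hlt)
    linarith [lt_or_ge ‖(c:ℚ_[p])‖ 1]
  have hdn : ‖(((p:ℤ)*c : ℤ) : ℚ_[p])‖ = (p:ℝ)^(-1 : ℤ) := by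
    push_cast
    rw [norm_mul, hcn, mul_one, Padic.norm_p, ← zpow_neg_one]
  -- norm of LHS when y ≠ 0
  have hLHS : ∀ hy0 : y ≠ 0, ‖(((p:ℤ)*c : ℤ) : ℚ_[p]) * y^2‖
      = (p:ℝ)^((-1) + (-y.valuation + -y.valuation)) := by
    intro hy0
    have hny := Padic.norm_eq_zpow_neg_valuation hy0
    rw [norm_mul, norm_pow, hdn, hny, sq, ← zpow_add₀ (ne_of_gt hp0),
      ← zpow_add₀ (ne_of_gt hp0)]
  -- Step 1 : ‖x‖ ≤ 1
  have hx : ‖x‖ ≤ 1 := by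
    by_contra hgt
    push_neg at hgt
    have hx0 : x ≠ 0 := by
      intro h0; rw [h0, norm_zero] at hgt; linarith
    have hxx : ‖x‖ < ‖x‖^2 := by nlinarith
    have hf : ‖x^2 - x - 3‖ = ‖x‖^2 := by
      have e : x^2 - x - 3 = x^2 + (-(x+3)) := by ring
      have h3 : ‖-(x+3)‖ < ‖x^2‖ := by
        rw [norm_neg, norm_pow]
        calc ‖x+3‖ ≤ max ‖x‖ ‖(3:ℚ_[p])‖ := Padic.nonarchimedean x 3
          _ ≤ ‖x‖ := by
              apply max_le le_rfl
              calc ‖(3:ℚ_[p])‖ = ‖((3:ℤ):ℚ_[p])‖ := by norm_num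
                _ ≤ 1 := Padic.norm_int_le_one 3
                _ ≤ ‖x‖ := le_of_lt hgt
          _ < ‖x‖^2 := hxx
      rw [e, Padic.add_eq_max_of_ne (ne_of_lt h3).symm,
        max_eq_left (le_of_lt h3), norm_pow]
    have hg : ‖x^2 + 2*x - 12‖ = ‖x‖^2 := by
      have e : x^2 + 2*x - 12 = x^2 + (2*x - 12) := by ring
      have h3 : ‖2*x - 12‖ < ‖x^2‖ := by
        rw [norm_pow]
        calc ‖2*x - 12‖ ≤ max ‖2*x‖ ‖(12:ℚ_[p])‖ := by
              have h := Padic.nonarchimedean (2*x) (-12)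
              rw [norm_neg] at h
              rw [sub_eq_add_neg]
              exact h
          _ ≤ ‖x‖ := by
              apply max_le
              · rw [norm_mul]
                calc ‖(2:ℚ_[p])‖ * ‖x‖ ≤ 1 * ‖x‖ := by
                      apply mul_le_mul_of_nonneg_right _ (norm_nonneg x)
                      calc ‖(2:ℚ_[p])‖ = ‖((2:ℤ):ℚ_[p])‖ := by norm_num
                        _ ≤ 1 := Padic.norm_int_le_one 2
                  _ = ‖x‖ := one_mul _
              · calc ‖(12:ℚ_[p])‖ = ‖((12:ℤ):ℚ_[p])‖ := by norm_num
                  _ ≤ 1 := Padic.norm_int_le_one 12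
                  _ ≤ ‖x‖ := le_of_lt hgt
          _ < ‖x‖^2 := hxx
      rw [e, Padic.add_eq_max_of_ne (ne_of_lt h3).symm,
        max_eq_left (le_of_lt h3), norm_pow]
    have hR : ‖(x^2 - x - 3)*(x^2 + 2*x - 12)‖ = ‖x‖^4 := by
      rw [norm_mul, hf, hg]; ring
    have hy0 : y ≠ 0 := by
      intro h0
      rw [h0] at hxy
      have : (0:ℝ) = ‖x‖^4 := by
        rw [← hR, ← hxy]; simp
      have hxpos : 0 < ‖x‖ := norm_pos_iff.mpr hx0
      nlinarith
    have hnx := Padic.norm_eq_zpow_neg_valuation hx0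
    have hR4 : ‖x‖^4 = (p:ℝ)^(-x.valuation + (-x.valuation + (-x.valuation + -x.valuation))) := by
      rw [hnx]
      have e4 : ((p:ℝ)^(-x.valuation))^(4:ℕ) = (p:ℝ)^(-x.valuation)*((p:ℝ)^(-x.valuation)*((p:ℝ)^(-x.valuation)*(p:ℝ)^(-x.valuation))) := by ring
      rw [e4, ← zpow_add₀ (ne_of_gt hp0), ← zpow_add₀ (ne_of_gt hp0), ← zpow_add₀ (ne_of_gt hp0)]
    have key : ((p:ℝ))^((-1) + (-y.valuation + -y.valuation))
        = ((p:ℝ))^(-x.valuation + (-x.valuation + (-x.valuation + -x.valuation))) := by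
      rw [← hLHS hy0, hxy, hR, hR4]
    rw [zpow_right_inj₀ hp0 hpne1] at key
    omega
  -- Step 2 : package x into ℤ_[p]
  set x0 : ℤ_[p] := ⟨x, hx⟩ with hx0def
  set z : ℤ_[p] := (x0^2 - x0 - 3) * (x0^2 + 2*x0 - 12) with hzdef
  have hzc : (z : ℚ_[p]) = (x^2 - x - 3)*(x^2 + 2*x - 12) := by
    push_cast [hzdef]
    rfl
  -- Step 3 : ‖z‖ < 1
  have hz1 : ‖z‖ < 1 := by
    rcases eq_or_ne y 0 with rfl | hy0
    · have hcz : (z : ℚ_[p]) = 0 := by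
        rw [hzc, ← hxy]; simp
      rw [(PadicInt.coe_eq_zero (x := z)).mp hcz, norm_zero]; norm_num
    · have hzn : ‖z‖ = ((p:ℝ))^((-1) + (-y.valuation + -y.valuation)) := by
        rw [← PadicInt.padic_norm_e_of_padicInt, hzc, ← hxy]
        exact hLHS hy0
      have hle : ‖z‖ ≤ 1 := z.2
      rw [hzn] at hle ⊢
      have hexp : (-1) + (-y.valuation + -y.valuation) ≤ 0 := by
        by_contra hpos
        push_neg at hpos
        have : (1:ℝ) < (p:ℝ)^((-1) + (-y.valuation + -y.valuation)) := by
          calc (1:ℝ) = (p:ℝ)^(0:ℤ) := by norm_num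
            _ < _ := zpow_lt_zpow_right₀ hp1 hpos
        linarith
      have hlt : (-1) + (-y.valuation + -y.valuation) < 0 := by omega
      calc ((p:ℝ))^((-1) + (-y.valuation + -y.valuation)) < (p:ℝ)^(0:ℤ) :=
            zpow_lt_zpow_right₀ hp1 hlt
        _ = 1 := by norm_num
  -- Step 4 : reduce mod p
  obtain ⟨w, hw⟩ := (PadicInt.norm_lt_one_iff_dvd z).mp hz1
  set φ := PadicInt.toZMod (p := p) with hφ
  set a : ZMod p := φ x0 with ha
  have hz0 : φ z = 0 := by
    rw [hw, map_mul]
    have hp0' : φ (p : ℤ_[p]) = 0 := by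
      rw [map_natCast, ZMod.natCast_self]
    rw [hp0', zero_mul]
  have hfac : (a^2 - a - 3) * (a^2 + 2*a - 12) = 0 := by
    rw [← hz0, hzdef]
    push_cast [map_mul, map_sub, map_add, map_pow, map_ofNat]
    ring
  rcases mul_eq_zero.mp hfac with h1 | h1
  · exact ⟨2*a - 1, by linear_combination (-4 : ZMod p) * h1⟩
  · exact ⟨a + 1, by linear_combination (-1 : ZMod p) * h1⟩
end

section
/- The point S₃ = (45/4, -117/8) lies on the elliptic curve E: y² = (x-9)(x-8)(x+18) over ℚ and has infinite order in E(ℚ). -/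
/-- The elliptic curve `E : y² = (x-9)(x-8)(x+18)`, i.e. `y² = x³ + x² - 234x + 1296`. -/
def E8 : WeierstrassCurve.Affine ℚ :=
  { a₁ := 0, a₂ := 1, a₃ := 0, a₄ := -234, a₆ := 1296 }

namespace E8aux

open WeierstrassCurve.Affine

local notation "v" => padicValRat 2

lemma Ea1 : E8.a₁ = 0 := rfl
lemma Ea2 : E8.a₂ = 1 := rfl
lemma Ea3 : E8.a₃ = 0 := rfl
lemma Ea4 : E8.a₄ = -234 := rfl
lemma Ea6 : E8.a₆ = 1296 := rfl

lemma eqn_iff (x y : ℚ) : E8.Equation x y ↔ y ^ 2 = x ^ 3 + x ^ 2 - 234 * x + 1296 := by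
  rw [WeierstrassCurve.Affine.equation_iff, Ea1, Ea2, Ea3, Ea4, Ea6]
  constructor <;> intro h <;> linarith

lemma negY_eq (x y : ℚ) : E8.negY x y = -y := by
  simp [WeierstrassCurve.Affine.negY, Ea1, Ea3]

lemma v2 : v (2 : ℚ) = 1 := by
  exact_mod_cast padicValRat.self (p := 2) one_lt_two

lemma v_odd_nat (n : ℕ) (h : ¬ 2 ∣ n) : v (n : ℚ) = 0 := by
  rw [padicValRat.of_nat, padicValNat.eq_zero_of_not_dvd h]
  simp

lemma v3 : v (3 : ℚ) = 0 := by exact_mod_cast v_odd_nat 3 (by decide)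
lemma v45 : v (45 : ℚ) = 0 := by exact_mod_cast v_odd_nat 45 (by decide)
lemma v4 : v (4 : ℚ) = 2 := by
  rw [show (4 : ℚ) = 2 ^ 2 by norm_num, padicValRat.pow (2 : ℚ), v2]; norm_num
lemma v234 : v (234 : ℚ) = 1 := by
  rw [show (234 : ℚ) = 2 * 117 by norm_num,
    padicValRat.mul two_ne_zero (by norm_num), v2]
  have : v (117 : ℚ) = 0 := by exact_mod_cast v_odd_nat 117 (by decide)
  rw [this]; norm_num
lemma v1296 : v (1296 : ℚ) = 4 := by
  rw [show (1296 : ℚ) = 2 ^ 4 * 81 by norm_num,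
    padicValRat.mul (by norm_num) (by norm_num), padicValRat.pow (2 : ℚ), v2]
  have : v (81 : ℚ) = 0 := by exact_mod_cast v_odd_nat 81 (by decide)
  rw [this]; norm_num

lemma neg1 : (-1 : ℚ) = -(1 : ℚ) := by norm_num
lemma neg234 : (-234 : ℚ) = -(234 : ℚ) := by norm_num

/-- Nonzero with valuation at least `b` (or zero). -/
def VB (b : ℤ) (q : ℚ) : Prop := q = 0 ∨ (q ≠ 0 ∧ b ≤ v q)

lemma VB.of {b : ℤ} {q : ℚ} (h : q ≠ 0) (h2 : b ≤ v q) : VB b q := Or.inr ⟨h, h2⟩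

lemma VB.add {b : ℤ} {q r : ℚ} (hq : VB b q) (hr : VB b r) : VB b (q + r) := by
  rcases hq with rfl | ⟨hq0, hqv⟩
  · simpa
  rcases hr with rfl | ⟨hr0, hrv⟩
  · rw [add_zero]; exact Or.inr ⟨hq0, hqv⟩
  by_cases h : q + r = 0
  · exact Or.inl h
  · exact Or.inr ⟨h, le_trans (le_min hqv hrv) (padicValRat.min_le_padicValRat_add h)⟩

lemma vadd_exact {q r : ℚ} {b : ℤ} (hq : q ≠ 0) (hvq : v q < b) (hr : VB b r) :
    q + r ≠ 0 ∧ v (q + r) = v q := by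
  rcases hr with rfl | ⟨hr0, hrv⟩
  · simpa using hq
  have hlt : v q < v r := lt_of_lt_of_le hvq hrv
  have hne : q + r ≠ 0 := by
    intro h0
    have hr' : r = -q := by linarith [congrArg id h0, add_eq_zero_iff_neg_eq.mp h0]
    rw [hr', padicValRat.neg] at hlt
    exact lt_irrefl _ hlt
  exact ⟨hne, padicValRat.add_eq_of_lt hne hq hr0 hlt⟩

lemma levels {x y : ℚ} {m : ℤ} (e : y ^ 2 = x ^ 3 + x ^ 2 - 234 * x + 1296)
    (hx : v x = -2 * m) (hm : 1 ≤ m) : x ≠ 0 ∧ y ≠ 0 ∧ v y = -3 * m := by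
  have hx0 : x ≠ 0 := by
    intro h; rw [h, padicValRat.zero] at hx; omega
  have vx2 : v (x ^ 2) = 2 * (-2 * m) := by rw [padicValRat.pow x, hx]; norm_num
  have vx3 : v (x ^ 3) = 3 * (-2 * m) := by rw [padicValRat.pow x, hx]; norm_num
  have v234x : v (-(234 * x)) = 1 + -2 * m := by
    rw [padicValRat.neg, padicValRat.mul (by norm_num) hx0, v234, hx]
  have key : x ^ 3 + (x ^ 2 + (-(234 * x) + 1296)) ≠ 0 ∧
      v (x ^ 3 + (x ^ 2 + (-(234 * x) + 1296))) = v (x ^ 3) := by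
    refine vadd_exact (b := -6 * m + 1) (pow_ne_zero 3 hx0) (by rw [vx3]; omega) ?_
    refine VB.add (VB.of (pow_ne_zero 2 hx0) (by rw [vx2]; omega)) ?_
    refine VB.add (VB.of (neg_ne_zero.mpr (mul_ne_zero (by norm_num) hx0)) (by rw [v234x]; omega)) ?_
    exact VB.of (by norm_num) (by rw [v1296]; omega)
  have harr : x ^ 3 + (x ^ 2 + (-(234 * x) + 1296)) = x ^ 3 + x ^ 2 - 234 * x + 1296 := by ring
  rw [harr] at key
  have hy0 : y ≠ 0 := by
    intro h
    rw [h] at e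
    exact key.1 (by linarith)
  have : v (y ^ 2) = 3 * (-2 * m) := by rw [e, key.2, vx3]
  rw [padicValRat.pow y] at this
  exact ⟨hx0, hy0, by omega⟩

lemma lemD {x y : ℚ} {m : ℤ} (e : y ^ 2 = x ^ 3 + x ^ 2 - 234 * x + 1296)
    (hx : v x = -2 * m) (hm : 1 ≤ m) :
    ((3 * x ^ 2 + 2 * x - 234) / (2 * y)) ^ 2 - 1 - x - x ≠ 0 ∧
    v (((3 * x ^ 2 + 2 * x - 234) / (2 * y)) ^ 2 - 1 - x - x) = -2 * (m + 1) := by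
  obtain ⟨hx0, hy0, hvy⟩ := levels e hx hm
  have h3x2 : (3 : ℚ) * x ^ 2 ≠ 0 := mul_ne_zero (by norm_num) (pow_ne_zero 2 hx0)
  have v3x2 : v (3 * x ^ 2) = -4 * m := by
    rw [padicValRat.mul (by norm_num) (pow_ne_zero 2 hx0), v3, padicValRat.pow x, hx]; ring
  have hnum : 3 * x ^ 2 + (2 * x + -234) ≠ 0 ∧ v (3 * x ^ 2 + (2 * x + -234)) = v (3 * x ^ 2) := by
    refine vadd_exact (b := -4 * m + 1) h3x2 (by rw [v3x2]; omega) ?_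
    refine VB.add (VB.of (mul_ne_zero two_ne_zero hx0)
      (by rw [padicValRat.mul two_ne_zero hx0, v2, hx]; omega)) ?_
    exact VB.of (by norm_num) (by rw [neg234, padicValRat.neg, v234]; omega)
  have hnum_arr : 3 * x ^ 2 + 2 * x - 234 = 3 * x ^ 2 + (2 * x + -234) := by ring
  set l : ℚ := (3 * x ^ 2 + 2 * x - 234) / (2 * y) with hl
  have h2y : (2 : ℚ) * y ≠ 0 := mul_ne_zero two_ne_zero hy0
  have hl0 : l ≠ 0 := div_ne_zero (by rw [hnum_arr]; exact hnum.1) h2y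
  have hvl : v l = -m - 1 := by
    rw [hl, padicValRat.div (by rw [hnum_arr]; exact hnum.1) h2y, hnum_arr, hnum.2, v3x2,
      padicValRat.mul two_ne_zero hy0, v2, hvy]
    ring
  have hvl2 : v (l ^ 2) = -2 * m - 2 := by rw [padicValRat.pow l, hvl]; ring
  have key : l ^ 2 + (-(2 * x) + -1) ≠ 0 ∧ v (l ^ 2 + (-(2 * x) + -1)) = v (l ^ 2) := by
    refine vadd_exact (b := -2 * m - 1) (pow_ne_zero 2 hl0) (by rw [hvl2]; omega) ?_
    refine VB.add (VB.of (by simpa using hx0)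
      (by rw [padicValRat.neg, padicValRat.mul two_ne_zero hx0, v2, hx]; omega)) ?_
    exact VB.of (by norm_num) (by rw [neg1, padicValRat.neg, padicValRat.one]; omega)
  have harr : l ^ 2 - 1 - x - x = l ^ 2 + (-(2 * x) + -1) := by ring
  rw [harr]
  exact ⟨key.1, by rw [key.2, hvl2]; ring⟩

lemma lemA {x₁ y₁ x₂ y₂ : ℚ} {a b : ℤ}
    (e₁ : y₁ ^ 2 = x₁ ^ 3 + x₁ ^ 2 - 234 * x₁ + 1296)
    (e₂ : y₂ ^ 2 = x₂ ^ 3 + x₂ ^ 2 - 234 * x₂ + 1296)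
    (h1 : v x₁ = -2 * a) (h2 : v x₂ = -2 * b) (hb : 1 ≤ b) (hba : b < a) :
    x₁ ≠ x₂ ∧
    ((y₁ - y₂) / (x₁ - x₂)) ^ 2 - 1 - x₁ - x₂ ≠ 0 ∧
    v (((y₁ - y₂) / (x₁ - x₂)) ^ 2 - 1 - x₁ - x₂) = -2 * b := by
  obtain ⟨hx10, hy10, hvy1⟩ := levels e₁ h1 (by omega)
  obtain ⟨hx20, hy20, hvy2⟩ := levels e₂ h2 hb
  have hne : x₁ ≠ x₂ := by
    intro h; rw [h, h2] at h1; omega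
  have hsub : x₁ + -x₂ ≠ 0 ∧ v (x₁ + -x₂) = v x₁ :=
    vadd_exact (b := -2 * b) hx10 (by omega)
      (VB.of (neg_ne_zero.mpr hx20) (by rw [padicValRat.neg, h2]))
  have hsub' : x₁ - x₂ ≠ 0 := by rw [sub_eq_add_neg]; exact hsub.1
  have hvsub : v (x₁ - x₂) = -2 * a := by rw [sub_eq_add_neg, hsub.2, h1]
  -- the numerator N
  set N : ℚ := x₁ ^ 2 * x₂ + (x₁ * x₂ ^ 2 + (x₁ ^ 2 + (x₂ ^ 2 +
      (-(234 * x₁) + (-(234 * x₂) + (2592 + -(2 * (y₁ * y₂)))))))) with hNdef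
  have hlead : (x₁ ^ 2 * x₂ : ℚ) ≠ 0 := mul_ne_zero (pow_ne_zero 2 hx10) hx20
  have hvlead : v (x₁ ^ 2 * x₂) = -4 * a + -2 * b := by
    rw [padicValRat.mul (pow_ne_zero 2 hx10) hx20, padicValRat.pow x₁, h1, h2]; ring
  have v2592 : v (2592 : ℚ) = 5 := by
    rw [show (2592 : ℚ) = 2 * 1296 by norm_num, padicValRat.mul two_ne_zero (by norm_num),
      v2, v1296]
    norm_num
  have hVB : VB (-4 * a + -2 * b + 1) (x₁ * x₂ ^ 2 + (x₁ ^ 2 + (x₂ ^ 2 +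
      (-(234 * x₁) + (-(234 * x₂) + (2592 + -(2 * (y₁ * y₂)))))))) := by
    refine VB.add (VB.of (mul_ne_zero hx10 (pow_ne_zero 2 hx20))
      (by rw [padicValRat.mul hx10 (pow_ne_zero 2 hx20), padicValRat.pow x₂, h1, h2]; omega)) ?_
    refine VB.add (VB.of (pow_ne_zero 2 hx10) (by rw [padicValRat.pow x₁, h1]; omega)) ?_
    refine VB.add (VB.of (pow_ne_zero 2 hx20) (by rw [padicValRat.pow x₂, h2]; omega)) ?_
    refine VB.add (VB.of (neg_ne_zero.mpr (mul_ne_zero (by norm_num) hx10))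
      (by rw [padicValRat.neg, padicValRat.mul (by norm_num) hx10, v234, h1]; omega)) ?_
    refine VB.add (VB.of (neg_ne_zero.mpr (mul_ne_zero (by norm_num) hx20))
      (by rw [padicValRat.neg, padicValRat.mul (by norm_num) hx20, v234, h2]; omega)) ?_
    refine VB.add (VB.of (by norm_num) (by rw [v2592]; omega)) ?_
    refine VB.of (neg_ne_zero.mpr (mul_ne_zero two_ne_zero (mul_ne_zero hy10 hy20))) ?_
    rw [padicValRat.neg, padicValRat.mul two_ne_zero (mul_ne_zero hy10 hy20), v2,
      padicValRat.mul hy10 hy20, hvy1, hvy2]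
    omega
  have hN : N ≠ 0 ∧ v N = -4 * a + -2 * b := by
    have h := vadd_exact (b := -4 * a + -2 * b + 1) hlead (by rw [hvlead]; omega) hVB
    exact ⟨h.1, by rw [h.2, hvlead]⟩
  have hNeq : N = (y₁ - y₂) ^ 2 - (x₁ - x₂) ^ 2 * (x₁ + x₂) := by
    rw [hNdef]; linear_combination -e₁ - e₂
  set l : ℚ := (y₁ - y₂) / (x₁ - x₂) with hl
  have key : l ^ 2 - 1 - x₁ - x₂ = N / (x₁ - x₂) ^ 2 + -1 := by
    rw [hNeq, hl]; field_simp; ring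
  have hvND : v (N / (x₁ - x₂) ^ 2) = -2 * b := by
    rw [padicValRat.div hN.1 (pow_ne_zero 2 hsub'), hN.2, padicValRat.pow (x₁ - x₂), hvsub]; ring
  have hND0 : N / (x₁ - x₂) ^ 2 ≠ 0 := div_ne_zero hN.1 (pow_ne_zero 2 hsub')
  have final : N / (x₁ - x₂) ^ 2 + -1 ≠ 0 ∧
      v (N / (x₁ - x₂) ^ 2 + -1) = v (N / (x₁ - x₂) ^ 2) := by
    refine vadd_exact (b := -2 * b + 1) hND0 (by rw [hvND]; omega) ?_
    exact VB.of (by norm_num) (by rw [neg1, padicValRat.neg, padicValRat.one]; omega)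
  rw [key]
  exact ⟨hne, final.1, by rw [final.2, hvND]⟩

/-- A point at filtration level `m`. -/
def Good (m : ℤ) (P : E8.Point) : Prop :=
  ∃ (x y : ℚ) (h : E8.Nonsingular x y), P = .some _ _ h ∧ v x = -2 * m

lemma Good.ne_zero {m : ℤ} {P : E8.Point} (h : Good m P) : P ≠ 0 := by
  obtain ⟨x, y, h, rfl, -⟩ := h
  exact WeierstrassCurve.Affine.Point.some_ne_zero h

lemma good_double {m : ℤ} {P : E8.Point} (hm : 1 ≤ m) (h : Good m P) :
    Good (m + 1) (P + P) := by
  obtain ⟨x, y, h, rfl, hv⟩ := h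
  have e := (eqn_iff x y).mp h.1
  obtain ⟨hx0, hy0, -⟩ := levels e hv hm
  have hynegY : y ≠ E8.negY x y := by
    rw [negY_eq]; intro hc; apply hy0; linarith
  rw [WeierstrassCurve.Affine.Point.add_self_of_Y_ne hynegY]
  have hslope : E8.slope x x y y = (3 * x ^ 2 + 2 * x - 234) / (2 * y) := by
    rw [slope_of_Y_ne rfl hynegY, negY_eq, Ea1, Ea2, Ea4]
    ring_nf
  refine ⟨_, _, _, rfl, ?_⟩
  have haX : E8.addX x x (E8.slope x x y y) =
      ((3 * x ^ 2 + 2 * x - 234) / (2 * y)) ^ 2 - 1 - x - x := by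
    rw [WeierstrassCurve.Affine.addX, hslope, Ea1, Ea2]; ring
  rw [haX]
  exact (lemD e hv hm).2

lemma good_add {a b : ℤ} {P Q : E8.Point} (hb : 1 ≤ b) (hba : b < a)
    (hP : Good a P) (hQ : Good b Q) : Good b (P + Q) := by
  obtain ⟨x₁, y₁, h₁, rfl, hv₁⟩ := hP
  obtain ⟨x₂, y₂, h₂, rfl, hv₂⟩ := hQ
  have e₁ := (eqn_iff x₁ y₁).mp h₁.1
  have e₂ := (eqn_iff x₂ y₂).mp h₂.1
  obtain ⟨hne, hx30, hvx3⟩ := lemA e₁ e₂ hv₁ hv₂ hb hba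
  rw [WeierstrassCurve.Affine.Point.add_of_X_ne hne]
  refine ⟨_, _, _, rfl, ?_⟩
  have haX : E8.addX x₁ x₂ (E8.slope x₁ x₂ y₁ y₂) =
      ((y₁ - y₂) / (x₁ - x₂)) ^ 2 - 1 - x₁ - x₂ := by
    rw [WeierstrassCurve.Affine.addX, slope_of_X_ne hne, Ea1, Ea2]; ring
  rw [haX]
  exact hvx3

lemma good_nsmul {P : E8.Point} (hP : Good 1 P) :
    ∀ n : ℕ, n ≠ 0 → Good (1 + (padicValNat 2 n : ℤ)) (n • P) := by
  intro n
  induction n using Nat.strong_induction_on with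
  | _ n ih =>
  intro hn0
  rcases Nat.even_or_odd n with he | ho
  · obtain ⟨k, hk⟩ := he
    have hk0 : k ≠ 0 := by omega
    have hkn : k < n := by omega
    have hG := good_double (m := 1 + (padicValNat 2 k : ℤ)) (by omega) (ih k hkn hk0)
    have hsmul : n • P = k • P + k • P := by rw [hk, add_nsmul]
    have hval : padicValNat 2 n = padicValNat 2 k + 1 := by
      rw [show n = 2 * k by omega, padicValNat.mul two_ne_zero hk0, padicValNat.self one_lt_two]
      omega
    have hcast : (1 : ℤ) + ((padicValNat 2 k + 1 : ℕ) : ℤ) =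
        1 + (padicValNat 2 k : ℤ) + 1 := by push_cast; ring
    rw [hsmul, hval, hcast]
    exact hG
  · have hvn : padicValNat 2 n = 0 :=
      padicValNat.eq_zero_of_not_dvd (by rcases ho with ⟨k, hk⟩; omega)
    rcases eq_or_ne n 1 with rfl | hn1
    · simpa [hvn] using hP
    · have hk0 : n - 1 ≠ 0 := by omega
      have hkn : n - 1 < n := by omega
      have hG := ih (n - 1) hkn hk0
      have hdvd : 2 ∣ (n - 1) := by rcases ho with ⟨k, hk⟩; omega
      have hge : 1 ≤ padicValNat 2 (n - 1) := by
        rcases hdvd with ⟨k, hk⟩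
        rw [hk, padicValNat.mul two_ne_zero (by omega), padicValNat.self one_lt_two]
        omega
      have hsmul : n • P = (n - 1) • P + P := by
        conv_lhs => rw [show n = (n - 1) + 1 by omega]
        rw [succ_nsmul]
      rw [hsmul, hvn]
      have := good_add (a := 1 + (padicValNat 2 (n - 1) : ℤ)) (b := 1) le_rfl
        (by omega) hG hP
      simpa using this
end E8aux

/-- The point `S₃ = (45/4, -117/8)` lies on `E : y² = (x-9)(x-8)(x+18)` and has infinite
order in `E(ℚ)`. -/
theorem stmt8 :
    E8.Equation (45 / 4) (-117 / 8) ∧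
    ∃ h : E8.Nonsingular (45 / 4) (-117 / 8),
      ∀ n : ℕ, n ≠ 0 → n • (WeierstrassCurve.Affine.Point.some _ _ h) ≠ (0 : E8.Point) := by
  have heq : E8.Equation (45 / 4) (-117 / 8) := by
    rw [E8aux.eqn_iff]; norm_num
  have hns : E8.Nonsingular (45 / 4) (-117 / 8) := by
    rw [WeierstrassCurve.Affine.nonsingular_iff]
    refine ⟨heq, Or.inr ?_⟩
    norm_num [E8aux.Ea1, E8aux.Ea3]
  refine ⟨heq, hns, fun n hn => ?_⟩
  have hGood1 : E8aux.Good 1 (.some _ _ hns) := by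
    refine ⟨45 / 4, -117 / 8, hns, rfl, ?_⟩
    rw [padicValRat.div (by norm_num) (by norm_num), E8aux.v45, E8aux.v4]
    norm_num
  exact (E8aux.good_nsmul hGood1 n hn).ne_zero
end

section
/- Let d be a nonzero integer and let E^d: y² = (x-8d)(x-9d)(x+18d). If R = ((r²-9d)/2, (r³-25d·r)/2) where r satisfies r⁴ - 50d·r² + 729d² = 0, then 2R = (8d, 0) on E^d. -/
/-- The quadratic twist `E^d : y² = (x-8d)(x-9d)(x+18d)`, i.e.
`y² = x³ + d·x² - 234d²·x + 1296d³`, base-changed to a field `F`. -/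
def Etw (F : Type*) [Field F] (d : F) : WeierstrassCurve.Affine F :=
  { a₁ := 0, a₂ := d, a₃ := 0, a₄ := -234 * d ^ 2, a₆ := 1296 * d ^ 3 }

private lemma some_congr {F : Type*} [Field F] {W : WeierstrassCurve.Affine F}
    {x₁ y₁ x₂ y₂ : F} (h₁ : W.Nonsingular x₁ y₁) (h₂ : W.Nonsingular x₂ y₂)
    (hx : x₁ = x₂) (hy : y₁ = y₂) :
    WeierstrassCurve.Affine.Point.some _ _ h₁ = WeierstrassCurve.Affine.Point.some _ _ h₂ := by
  subst hx hy; rfl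

open Classical in
/-- If `r` satisfies `r⁴ - 50d·r² + 729d² = 0` (with `d` a nonzero integer) and
`R = ((r²-9d)/2, (r³-25d·r)/2)`, then `2R = (8d, 0)` on `E^d : y² = (x-8d)(x-9d)(x+18d)`. -/
theorem stmt9 (F : Type*) [Field F] [CharZero F] (d : ℤ) (hd : d ≠ 0) (r : F)
    (hr : r ^ 4 - 50 * (d : F) * r ^ 2 + 729 * (d : F) ^ 2 = 0) :
    ∃ (h : (Etw F (d : F)).Nonsingular ((r ^ 2 - 9 * (d : F)) / 2)
        ((r ^ 3 - 25 * (d : F) * r) / 2))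
      (h8 : (Etw F (d : F)).Nonsingular (8 * (d : F)) 0),
      (2 : ℕ) • WeierstrassCurve.Affine.Point.some _ _ h =
        WeierstrassCurve.Affine.Point.some _ _ h8 := by
  set D : F := (d : F) with hDdef
  have hD : D ≠ 0 := Int.cast_ne_zero.mpr hd
  have hr0 : r ≠ 0 := by
    rintro rfl
    simp only [zero_pow, mul_zero, zero_add, ne_eq, OfNat.ofNat_ne_zero,
      not_false_eq_true, zero_sub, neg_zero] at hr
    exact hD (pow_eq_zero_iff (n := 2) (by norm_num) |>.mp
      (by linear_combination hr / 729))
  have hr25 : r ^ 2 - 25 * D ≠ 0 := by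
    intro h
    exact hD (pow_eq_zero_iff (n := 2) (by norm_num) |>.mp
      (by linear_combination hr / 104 + (r ^ 2 + 25 * D) / 104 * h - r ^ 2 / 52 * h))
  have hy0 : r ^ 3 - 25 * D * r ≠ 0 := by
    intro h
    apply hr25
    apply mul_left_cancel₀ hr0
    linear_combination h
  have hEq : (Etw F D).Equation ((r ^ 2 - 9 * D) / 2) ((r ^ 3 - 25 * D * r) / 2) := by
    rw [WeierstrassCurve.Affine.equation_iff]
    simp only [Etw]
    linear_combination ((r ^ 2 - 25 * D) / 8) * hr
  have h : (Etw F D).Nonsingular ((r ^ 2 - 9 * D) / 2) ((r ^ 3 - 25 * D * r) / 2) := by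
    rw [WeierstrassCurve.Affine.nonsingular_iff]
    refine ⟨hEq, Or.inr ?_⟩
    simp only [Etw, WeierstrassCurve.Affine.negY]
    intro hcon
    exact hy0 (by linear_combination hcon)
  have h8 : (Etw F D).Nonsingular (8 * D) 0 := by
    rw [WeierstrassCurve.Affine.nonsingular_iff]
    constructor
    · rw [WeierstrassCurve.Affine.equation_iff]; simp only [Etw]; ring
    · left
      simp only [Etw]
      intro hcon
      apply hD
      exact pow_eq_zero_iff (n := 2) (by norm_num) |>.mp
        (by linear_combination hcon / 26)
  refine ⟨h, h8, ?_⟩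
  have hyne : (r ^ 3 - 25 * D * r) / 2 ≠
      (Etw F D).negY ((r ^ 2 - 9 * D) / 2) ((r ^ 3 - 25 * D * r) / 2) := by
    simp only [Etw, WeierstrassCurve.Affine.negY]
    intro hcon
    exact hy0 (by linear_combination hcon)
  rw [two_nsmul, WeierstrassCurve.Affine.Point.add_self_of_Y_ne hyne]
  have hslope : (Etw F D).slope ((r ^ 2 - 9 * D) / 2) ((r ^ 2 - 9 * D) / 2)
      ((r ^ 3 - 25 * D * r) / 2) ((r ^ 3 - 25 * D * r) / 2) = r := by
    rw [WeierstrassCurve.Affine.slope_of_Y_ne rfl hyne, div_eq_iff (sub_ne_zero.mpr hyne)]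
    simp only [Etw, WeierstrassCurve.Affine.negY]
    linear_combination (-1 / 4 : F) * hr
  apply some_congr
  · rw [hslope]
    simp only [Etw, WeierstrassCurve.Affine.addX]
    ring
  · rw [WeierstrassCurve.Affine.addY, WeierstrassCurve.Affine.negAddY, hslope]
    simp only [Etw, WeierstrassCurve.Affine.negY, WeierstrassCurve.Affine.addX]
    ring
end

section
/- For an elliptic curve Ẽ over ℚ₂ with a₁ = 0, the quotient F(2ℤ₂)/2F(2ℤ₂) of the formal group F of Ẽ is isomorphic to ℤ/2ℤ. -/
instance : Fact (Nat.Prime 2) := ⟨Nat.prime_two⟩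



open IsUltrametricDist NNReal

section
variable (F : ℤ_[2] → ℤ_[2] → ℤ_[2]) (c : ℕ × ℕ → ℤ_[2])
    (hsum : ∀ x y : ℤ_[2], Summable fun m : ℕ × ℕ => c m * x ^ m.1 * y ^ m.2)
    (hF : ∀ x y : ℤ_[2], F x y = ∑' m : ℕ × ℕ, c m * x ^ m.1 * y ^ m.2)
    (h00 : c (0, 0) = 0) (h10 : c (1, 0) = 1) (h01 : c (0, 1) = 1)
    (h11 : c (1, 1) = 0)
    (hx : ∀ i : ℕ, 2 ≤ i → c (i, 0) = 0) (hy : ∀ j : ℕ, 2 ≤ j → c (0, j) = 0)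

/-- the tail of the series -/
noncomputable def gg (x y : ℤ_[2]) : ℕ × ℕ → ℤ_[2] :=
  fun m => if m = (1,0) ∨ m = (0,1) then 0 else c m * x ^ m.1 * y ^ m.2

include h10 h01 in
lemma gg_eq (x y : ℤ_[2]) :
    gg c x y = (fun m : ℕ × ℕ => c m * x ^ m.1 * y ^ m.2) -
      (fun m => if m = (1,0) then x else if m = (0,1) then y else 0) := by
  funext m
  simp only [gg, Pi.sub_apply]
  by_cases h1 : m = (1,0)
  · subst h1; simp [h10]
  · by_cases h2 : m = (0,1)
    · subst h2; simp [h01]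
    · simp [h1, h2]

lemma hsum_aux (x y : ℤ_[2]) :
    Summable (fun m : ℕ × ℕ => if m = (1,0) then x else if m = (0,1) then y else 0) := by
  apply summable_of_ne_finset_zero (s := {(1,0), (0,1)})
  intro m hm
  simp only [Finset.mem_insert, Finset.mem_singleton, not_or] at hm
  simp [hm.1, hm.2]

lemma tsum_aux (x y : ℤ_[2]) :
    ∑' m : ℕ × ℕ, (if m = (1,0) then x else if m = (0,1) then y else 0) = x + y := by
  rw [tsum_eq_sum (s := {(1,0), (0,1)}) (by
    intro m hm
    simp only [Finset.mem_insert, Finset.mem_singleton, not_or] at hm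
    simp [hm.1, hm.2])]
  rw [Finset.sum_pair (by decide)]
  simp

include h10 h01 hsum in
lemma gg_summable (x y : ℤ_[2]) : Summable (gg c x y) := by
  rw [gg_eq c h10 h01]
  exact (hsum x y).sub (hsum_aux x y)

include h10 h01 hsum hF in
lemma F_decomp (x y : ℤ_[2]) : F x y = (x + y) + ∑' m, gg c x y m := by
  rw [hF, gg_eq c h10 h01]
  simp only [Pi.sub_apply]
  rw [Summable.tsum_sub (hsum x y) (hsum_aux x y), tsum_aux]
  ring

include h00 h11 hx hy in
lemma gg_bound (x y : ℤ_[2]) (hxn : ‖x‖ ≤ 2⁻¹) (hyn : ‖y‖ ≤ 2⁻¹) (m : ℕ × ℕ) :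
    ‖gg c x y m‖ ≤ 8⁻¹ := by
  obtain ⟨i, j⟩ := m
  by_cases hsp : ((i,j) : ℕ × ℕ) = (1,0) ∨ ((i,j) : ℕ × ℕ) = (0,1)
  · rw [gg]; rw [if_pos hsp, norm_zero]; norm_num
  rw [gg, if_neg hsp]
  have hnorm : ∀ z w : ℤ_[2], ‖z * w‖ = ‖z‖ * ‖w‖ := norm_mul
  have hc : ‖c (i,j)‖ ≤ 1 := PadicInt.norm_le_one _
  have hb : ∀ (z : ℤ_[2]) (k : ℕ), ‖z‖ ≤ 2⁻¹ → ‖z ^ k‖ ≤ (2⁻¹ : ℝ) ^ k := by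
    intro z k hz
    rw [norm_pow]
    exact pow_le_pow_left₀ (norm_nonneg z) hz k
  -- main case analysis
  match i, j with
  | 0, 0 => rw [h00]; simp
  | 1, 0 => exact absurd (Or.inl rfl) hsp
  | 0, 1 => exact absurd (Or.inr rfl) hsp
  | (i+2), 0 => rw [hx (i+2) (by omega)]; simp
  | 0, (j+2) => rw [hy (j+2) (by omega)]; simp
  | 1, 1 => rw [h11]; simp
  | (i+2), (j+1) =>
    calc ‖c (i+2, j+1) * x ^ (i+2) * y ^ (j+1)‖
        = ‖c (i+2, j+1)‖ * ‖x ^ (i+2)‖ * ‖y ^ (j+1)‖ := by rw [hnorm, hnorm]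
      _ ≤ 1 * (2⁻¹:ℝ)^(i+2) * (2⁻¹:ℝ)^(j+1) := by
          have h1 := hb x (i+2) hxn; have h2 := hb y (j+1) hyn
          gcongr <;> first | assumption | positivity
      _ ≤ 8⁻¹ := by
          rw [one_mul, ← pow_add]
          calc ((2:ℝ)⁻¹)^(i+2+(j+1)) ≤ (2⁻¹:ℝ)^3 := by
                apply pow_le_pow_of_le_one (by norm_num) (by norm_num) (by omega)
            _ = 8⁻¹ := by norm_num
  | 1, (j+2) =>
    calc ‖c (1, j+2) * x ^ 1 * y ^ (j+2)‖
        = ‖c (1, j+2)‖ * ‖x ^ 1‖ * ‖y ^ (j+2)‖ := by rw [hnorm, hnorm]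
      _ ≤ 1 * (2⁻¹:ℝ)^1 * (2⁻¹:ℝ)^(j+2) := by
          have h1 := hb x 1 hxn; have h2 := hb y (j+2) hyn
          gcongr <;> first | assumption | positivity
      _ ≤ 8⁻¹ := by
          rw [one_mul, ← pow_add]
          calc ((2:ℝ)⁻¹)^(1+(j+2)) ≤ (2⁻¹:ℝ)^3 := by
                apply pow_le_pow_of_le_one (by norm_num) (by norm_num) (by omega)
            _ = 8⁻¹ := by norm_num

include h00 h11 hx hy in
lemma gg_tsum_bound (x y : ℤ_[2]) (hxn : ‖x‖ ≤ 2⁻¹) (hyn : ‖y‖ ≤ 2⁻¹) :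
    ‖∑' m, gg c x y m‖ ≤ 8⁻¹ :=
  norm_tsum_le_of_forall_le_of_nonneg (by norm_num) (gg_bound c h00 h11 hx hy x y hxn hyn)

lemma pow_sub_pow_bound (x y : ℤ_[2]) (hxn : ‖x‖ ≤ 2⁻¹) (hyn : ‖y‖ ≤ 2⁻¹)
    (n : ℕ) (hn : 3 ≤ n) : ‖x ^ n - y ^ n‖ ≤ 4⁻¹ * ‖x - y‖ := by
  rw [← geom_sum₂_mul x y n, norm_mul]
  have hsumb : ‖∑ k ∈ Finset.range n, x ^ k * y ^ (n - 1 - k)‖ ≤ 4⁻¹ := by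
    apply norm_sum_le_of_forall_le_of_nonneg (by norm_num)
    intro k hk
    rw [Finset.mem_range] at hk
    calc ‖x ^ k * y ^ (n - 1 - k)‖ = ‖x‖ ^ k * ‖y‖ ^ (n - 1 - k) := by
          rw [norm_mul, norm_pow, norm_pow]
      _ ≤ (2⁻¹:ℝ) ^ k * (2⁻¹:ℝ) ^ (n - 1 - k) := by
          gcongr <;> first | exact norm_nonneg _ | assumption
      _ = (2⁻¹:ℝ) ^ (n - 1) := by rw [← pow_add]; congr 1; omega
      _ ≤ (2⁻¹:ℝ) ^ 2 := by
          apply pow_le_pow_of_le_one (by norm_num) (by norm_num) (by omega)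
      _ = 4⁻¹ := by norm_num
  exact mul_le_mul_of_nonneg_right hsumb (norm_nonneg _)

include h00 h11 hx hy h10 h01 hsum in
lemma gg_contr (x y : ℤ_[2]) (hxn : ‖x‖ ≤ 2⁻¹) (hyn : ‖y‖ ≤ 2⁻¹) :
    ‖(∑' m, gg c x x m) - ∑' m, gg c y y m‖ ≤ 4⁻¹ * ‖x - y‖ := by
  rw [← Summable.tsum_sub (gg_summable c hsum h10 h01 x x) (gg_summable c hsum h10 h01 y y)]
  apply norm_tsum_le_of_forall_le_of_nonneg (by positivity)
  rintro ⟨i, j⟩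
  by_cases hsp : ((i,j) : ℕ × ℕ) = (1,0) ∨ ((i,j) : ℕ × ℕ) = (0,1)
  · rw [gg, gg, if_pos hsp, if_pos hsp, sub_zero, norm_zero]; positivity
  rw [gg, gg, if_neg hsp, if_neg hsp, mul_assoc, mul_assoc, ← pow_add, ← pow_add, ← mul_sub]
  match i, j with
  | 0, 0 => rw [h00]; simp
  | 1, 0 => exact absurd (Or.inl rfl) hsp
  | 0, 1 => exact absurd (Or.inr rfl) hsp
  | (i+2), 0 => rw [hx (i+2) (by omega)]; simp
  | 0, (j+2) => rw [hy (j+2) (by omega)]; simp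
  | 1, 1 => rw [h11]; simp
  | (i+2), (j+1) =>
    calc ‖c (i+2, j+1) * (x ^ (i+2+(j+1)) - y ^ (i+2+(j+1)))‖
        ≤ 1 * ‖x ^ (i+2+(j+1)) - y ^ (i+2+(j+1))‖ := by
          rw [norm_mul]
          exact mul_le_mul_of_nonneg_right (PadicInt.norm_le_one _) (norm_nonneg _)
      _ = ‖x ^ (i+2+(j+1)) - y ^ (i+2+(j+1))‖ := one_mul _
      _ ≤ 4⁻¹ * ‖x - y‖ := pow_sub_pow_bound x y hxn hyn _ (by omega)
  | 1, (j+2) =>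
    calc ‖c (1, j+2) * (x ^ (1+(j+2)) - y ^ (1+(j+2)))‖
        ≤ 1 * ‖x ^ (1+(j+2)) - y ^ (1+(j+2))‖ := by
          rw [norm_mul]
          exact mul_le_mul_of_nonneg_right (PadicInt.norm_le_one _) (norm_nonneg _)
      _ = ‖x ^ (1+(j+2)) - y ^ (1+(j+2))‖ := one_mul _
      _ ≤ 4⁻¹ * ‖x - y‖ := pow_sub_pow_bound x y hxn hyn _ (by omega)

lemma aux_two_dvd_add (u v : ℤ_[2]) (hu : ¬ (2:ℤ_[2]) ∣ u) (hv : ¬ (2:ℤ_[2]) ∣ v) :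
    (2:ℤ_[2]) ∣ (u + v) := by
  have key : ∀ w : ℤ_[2], (2:ℤ_[2]) ∣ w ↔ PadicInt.toZMod w = 0 := by
    intro w
    rw [← RingHom.mem_ker, PadicInt.ker_toZMod, PadicInt.maximalIdeal_eq_span_p,
      Ideal.mem_span_singleton]
    norm_num
  rw [key] at hu hv ⊢
  have h1 : ∀ z : ZMod 2, z ≠ 0 → z = 1 := by decide
  rw [map_add, h1 _ hu, h1 _ hv]
  decide

lemma aux_norm_two : ‖(2 : ℤ_[2])‖ = 2⁻¹ := by
  have := PadicInt.norm_p (p := 2)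
  norm_num at this ⊢
  exact this

lemma aux_dvd_iff (z : ℤ_[2]) (n : ℕ) : ‖z‖ ≤ (2⁻¹ : ℝ) ^ n ↔ (2 : ℤ_[2]) ^ n ∣ z := by
  have h := PadicInt.norm_le_pow_iff_mem_span_pow z n
  rw [Ideal.mem_span_singleton] at h
  have h2 : ((2 : ℕ) : ℝ) ^ (-n : ℤ) = (2⁻¹ : ℝ) ^ n := by
    rw [zpow_neg, zpow_natCast, inv_pow]; norm_num
  rw [h2] at h
  simpa using h

include hsum hF h00 h10 h01 h11 hx hy in
lemma exists_halving (t : ℤ_[2]) (ht : ‖t‖ ≤ 4⁻¹) :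
    ∃ x : ℤ_[2], ‖x‖ ≤ 2⁻¹ ∧ F x x = t := by
  haveI : CompleteSpace {x : ℤ_[2] // ‖x‖ ≤ (2⁻¹ : ℝ)} :=
    IsClosed.completeSpace_coe (hs := isClosed_le continuous_norm continuous_const)
  haveI : Nonempty {x : ℤ_[2] // ‖x‖ ≤ (2⁻¹ : ℝ)} := ⟨⟨0, by norm_num⟩⟩
  -- the map x ↦ (t - tail(x,x)) / 2
  have key : ∀ x : {x : ℤ_[2] // ‖x‖ ≤ (2⁻¹ : ℝ)}, ∃ v : ℤ_[2],
      2 * v = t - ∑' m, gg c (x : ℤ_[2]) (x : ℤ_[2]) m ∧ ‖v‖ ≤ 2⁻¹ := by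
    intro x
    have hb : ‖t - ∑' m, gg c (x : ℤ_[2]) (x : ℤ_[2]) m‖ ≤ 4⁻¹ := by
      have h1 := gg_tsum_bound c h00 h11 hx hy (x : ℤ_[2]) (x : ℤ_[2]) x.2 x.2
      calc ‖t - ∑' m, gg c (x : ℤ_[2]) (x : ℤ_[2]) m‖
          ≤ max ‖t‖ ‖∑' m, gg c (x : ℤ_[2]) (x : ℤ_[2]) m‖ := by
            rw [sub_eq_add_neg]
            exact (norm_add_le_max _ _).trans (by rw [norm_neg])
        _ ≤ 4⁻¹ := max_le ht (h1.trans (by norm_num))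
    have hdvd : (2 : ℤ_[2]) ^ 1 ∣ (t - ∑' m, gg c (x : ℤ_[2]) (x : ℤ_[2]) m) := by
      rw [← aux_dvd_iff]
      exact hb.trans (by norm_num)
    obtain ⟨v, hv⟩ := hdvd
    rw [pow_one] at hv
    refine ⟨v, hv.symm, ?_⟩
    have : ‖(2 : ℤ_[2]) * v‖ = 2⁻¹ * ‖v‖ := by rw [norm_mul, aux_norm_two]
    rw [hv, this] at hb
    linarith
  choose T hT1 hT2 using key
  set T' : {x : ℤ_[2] // ‖x‖ ≤ (2⁻¹ : ℝ)} → {x : ℤ_[2] // ‖x‖ ≤ (2⁻¹ : ℝ)} :=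
    fun x => ⟨T x, hT2 x⟩ with hT'
  have hnorm2 : ∀ w : ℤ_[2], ‖w‖ = 2 * ‖2 * w‖ := by
    intro w
    rw [norm_mul, aux_norm_two]
    ring
  have hlip : LipschitzWith 2⁻¹ T' := by
    apply LipschitzWith.of_dist_le_mul
    intro x y
    rw [Subtype.dist_eq, dist_eq_norm, Subtype.dist_eq, dist_eq_norm]
    have h2 : (2 : ℤ_[2]) * (T x - T y) =
        (∑' m, gg c (y : ℤ_[2]) (y : ℤ_[2]) m) - ∑' m, gg c (x : ℤ_[2]) (x : ℤ_[2]) m := by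
      rw [mul_sub, hT1, hT1]; ring
    have h3 := gg_contr c hsum h00 h10 h01 h11 hx hy (y : ℤ_[2]) (x : ℤ_[2]) y.2 x.2
    calc ‖T x - T y‖ = 2 * ‖(2 : ℤ_[2]) * (T x - T y)‖ := hnorm2 _
      _ = 2 * ‖(∑' m, gg c (y : ℤ_[2]) (y : ℤ_[2]) m) - ∑' m, gg c (x : ℤ_[2]) (x : ℤ_[2]) m‖ := by
          rw [h2]
      _ ≤ 2 * (4⁻¹ * ‖(y : ℤ_[2]) - (x : ℤ_[2])‖) := by
          exact mul_le_mul_of_nonneg_left h3 (by norm_num)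
      _ = ((2⁻¹ : ℝ≥0) : ℝ) * ‖(x : ℤ_[2]) - (y : ℤ_[2])‖ := by
          rw [← norm_neg, neg_sub]
          push_cast
          ring
  have hcontr : ContractingWith 2⁻¹ T' := ⟨by rw [← NNReal.coe_lt_coe]; norm_num, hlip⟩
  set xs := ContractingWith.fixedPoint T' hcontr with hxs
  have hfix : T' xs = xs := ContractingWith.fixedPoint_isFixedPt hcontr
  refine ⟨(xs : ℤ_[2]), xs.2, ?_⟩
  have h4 : (2 : ℤ_[2]) * (xs : ℤ_[2]) =
      t - ∑' m, gg c (xs : ℤ_[2]) (xs : ℤ_[2]) m := by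
    conv_lhs => rw [← hfix]
    exact hT1 _
  rw [F_decomp F c hsum hF h10 h01]
  rw [← two_mul, h4]
  ring

end


/-- For an elliptic curve over `ℚ₂` with `a₁ = 0`, the quotient `F(2ℤ₂)/2F(2ℤ₂)` of the
group of points of its formal group `F` with parameter in `2ℤ₂` is isomorphic to `ℤ/2ℤ`.
Here the formal group law is given by a convergent power series `F(x,y) = ∑ c_{ij} x^i y^j`
with `c₀₀ = 0`, `c₁₀ = c₀₁ = 1`, `c₁₁ = -a₁ = 0`, `c_{i0} = c_{0j} = 0` for `i, j ≥ 2`, and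
`A` is the abelian group of points `F(2ℤ₂)`, i.e. an abelian group whose underlying set is
`{x : ℤ₂ | ‖x‖ ≤ 1/2}` and whose addition is given by `F`. -/
theorem stmt16 (F : ℤ_[2] → ℤ_[2] → ℤ_[2]) (c : ℕ × ℕ → ℤ_[2])
    (hsum : ∀ x y : ℤ_[2], Summable fun m : ℕ × ℕ => c m * x ^ m.1 * y ^ m.2)
    (hF : ∀ x y : ℤ_[2], F x y = ∑' m : ℕ × ℕ, c m * x ^ m.1 * y ^ m.2)
    (h00 : c (0, 0) = 0) (h10 : c (1, 0) = 1) (h01 : c (0, 1) = 1)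
    (h11 : c (1, 1) = 0)
    (hx : ∀ i : ℕ, 2 ≤ i → c (i, 0) = 0) (hy : ∀ j : ℕ, 2 ≤ j → c (0, j) = 0)
    (A : Type*) [AddCommGroup A] (e : A ≃ {x : ℤ_[2] // ‖x‖ ≤ 2⁻¹})
    (he : ∀ a b : A, (e (a + b) : ℤ_[2]) = F (e a) (e b)) :
    Nonempty ((A ⧸ (zsmulAddGroupHom 2 : A →+ A).range) ≃+ ZMod 2) := by

  classical
  have hEa : ∀ a : A, ‖(e a : ℤ_[2])‖ ≤ 2⁻¹ := fun a => (e a).2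
  set P : A → Prop := fun a => ‖(e a : ℤ_[2])‖ ≤ 4⁻¹ with hPdef
  have hFd : ∀ a b : A, (e (a + b) : ℤ_[2]) =
      ((e a : ℤ_[2]) + (e b : ℤ_[2])) + ∑' m, gg c (e a : ℤ_[2]) (e b : ℤ_[2]) m := by
    intro a b; rw [he, F_decomp F c hsum hF h10 h01]
  have htail : ∀ a b : A, ‖∑' m, gg c (e a : ℤ_[2]) (e b : ℤ_[2]) m‖ ≤ 8⁻¹ :=
    fun a b => gg_tsum_bound c h00 h11 hx hy _ _ (hEa a) (hEa b)
  have hPsum : ∀ a b : A, (P (a + b) ↔ ‖(e a : ℤ_[2]) + (e b : ℤ_[2])‖ ≤ 4⁻¹) := by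
    intro a b
    have h1 := (htail a b).trans (by norm_num : (8⁻¹:ℝ) ≤ 4⁻¹)
    constructor
    · intro h
      have h2 : (e a : ℤ_[2]) + (e b : ℤ_[2]) =
          (e (a + b) : ℤ_[2]) + (- ∑' m, gg c (e a : ℤ_[2]) (e b : ℤ_[2]) m) := by
        rw [hFd]; ring
      rw [h2]
      exact (norm_add_le_max _ _).trans (max_le h (by rwa [norm_neg]))
    · intro h
      show ‖(e (a+b) : ℤ_[2])‖ ≤ 4⁻¹
      rw [hFd]
      exact (norm_add_le_max _ _).trans (max_le h h1)
  have hdvd1 : ∀ a : A, (2 : ℤ_[2]) ∣ (e a : ℤ_[2]) := by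
    intro a
    have := (aux_dvd_iff (e a : ℤ_[2]) 1).mp (by simpa using hEa a)
    simpa using this
  have hkey : ∀ a b : A, (P (a + b) ↔ (P a ↔ P b)) := by
    intro a b
    rw [hPsum]
    rcases le_or_gt ‖(e a : ℤ_[2])‖ 4⁻¹ with ha | ha <;>
      rcases le_or_gt ‖(e b : ℤ_[2])‖ 4⁻¹ with hb | hb
    · simp only [hPdef]
      have : ‖(e a : ℤ_[2]) + (e b : ℤ_[2])‖ ≤ 4⁻¹ :=
        (norm_add_le_max _ _).trans (max_le ha hb)
      tauto
    · have hne : ‖(e a : ℤ_[2])‖ ≠ ‖(e b : ℤ_[2])‖ := by linarith [ha, hb] <;> exact ne_of_lt (lt_of_le_of_lt ha hb)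
      have : ‖(e a : ℤ_[2]) + (e b : ℤ_[2])‖ = max ‖(e a : ℤ_[2])‖ ‖(e b : ℤ_[2])‖ :=
        norm_add_eq_max_of_norm_ne_norm hne
      simp only [hPdef]
      constructor
      · intro h; exfalso; rw [this] at h; have := le_of_max_le_right h; linarith
      · intro h; exfalso; exact absurd (h.mp ha) (not_le.mpr hb)
    · have hne : ‖(e a : ℤ_[2])‖ ≠ ‖(e b : ℤ_[2])‖ := ne_of_gt (lt_of_le_of_lt hb ha)
      have : ‖(e a : ℤ_[2]) + (e b : ℤ_[2])‖ = max ‖(e a : ℤ_[2])‖ ‖(e b : ℤ_[2])‖ :=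
        norm_add_eq_max_of_norm_ne_norm hne
      simp only [hPdef]
      constructor
      · intro h; exfalso; rw [this] at h; have := le_of_max_le_left h; linarith
      · intro h; exfalso; exact absurd (h.mpr hb) (not_le.mpr ha)
    · -- both norms are > 4⁻¹ : the sum is divisible by 4
      obtain ⟨u, hu⟩ := hdvd1 a
      obtain ⟨v, hv⟩ := hdvd1 b
      have hu2 : ¬ (2 : ℤ_[2]) ∣ u := by
        rintro ⟨w, rfl⟩
        have : ‖(e a : ℤ_[2])‖ ≤ 4⁻¹ := by
          rw [hu, ← mul_assoc]
          have : ((2 : ℤ_[2]) * 2) = 2 ^ 2 := by ring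
          rw [this]
          have := (aux_dvd_iff ((2:ℤ_[2])^2 * w) 2).mpr ⟨w, rfl⟩
          calc ‖(2:ℤ_[2])^2 * w‖ ≤ (2⁻¹:ℝ)^2 := this
            _ = 4⁻¹ := by norm_num
        linarith
      have hv2 : ¬ (2 : ℤ_[2]) ∣ v := by
        rintro ⟨w, rfl⟩
        have : ‖(e b : ℤ_[2])‖ ≤ 4⁻¹ := by
          rw [hv, ← mul_assoc]
          have : ((2 : ℤ_[2]) * 2) = 2 ^ 2 := by ring
          rw [this]
          have := (aux_dvd_iff ((2:ℤ_[2])^2 * w) 2).mpr ⟨w, rfl⟩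
          calc ‖(2:ℤ_[2])^2 * w‖ ≤ (2⁻¹:ℝ)^2 := this
            _ = 4⁻¹ := by norm_num
        linarith
      obtain ⟨w, hw⟩ := aux_two_dvd_add u v hu2 hv2
      have h4 : (e a : ℤ_[2]) + (e b : ℤ_[2]) = 2 ^ 2 * w := by
        rw [hu, hv, ← mul_add, hw]; ring
      have h5 : ‖(e a : ℤ_[2]) + (e b : ℤ_[2])‖ ≤ 4⁻¹ := by
        rw [h4]
        calc ‖(2:ℤ_[2])^2 * w‖ ≤ (2⁻¹:ℝ)^2 := (aux_dvd_iff _ 2).mpr ⟨w, rfl⟩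
          _ = 4⁻¹ := by norm_num
      simp only [hPdef]
      constructor
      · intro _; constructor <;> intro _ <;> [linarith; linarith]
      · intro _; exact h5
  set φ : A → ZMod 2 := fun a => if P a then 0 else 1 with hφ
  have hφadd : ∀ a b : A, φ (a + b) = φ a + φ b := by
    intro a b
    by_cases ha : P a <;> by_cases hb : P b
    · have hab : P (a + b) := (hkey a b).mpr (iff_of_true ha hb)
      simp [hφ, ha, hb, hab]
    · have hab : ¬ P (a + b) := fun h => hb (((hkey a b).mp h).mp ha)
      simp [hφ, ha, hb, hab]
    · have hab : ¬ P (a + b) := fun h => ha (((hkey a b).mp h).mpr hb)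
      simp [hφ, ha, hb, hab]
    · have hab : P (a + b) := (hkey a b).mpr (iff_of_false ha hb)
      simp [hφ, ha, hb, hab]
      decide
  set Φ : A →+ ZMod 2 := AddMonoidHom.mk' φ hφadd with hΦ
  have hsurj : Function.Surjective Φ := by
    intro z
    have hz : ∀ z : ZMod 2, z = 0 ∨ z = 1 := by decide
    rcases hz z with rfl | rfl
    · exact ⟨0, map_zero Φ⟩
    · refine ⟨e.symm ⟨2, by rw [aux_norm_two]⟩, ?_⟩
      have hP2 : ¬ P (e.symm ⟨2, by rw [aux_norm_two]⟩) := by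
        simp only [hPdef]
        rw [Equiv.apply_symm_apply]
        simp only
        rw [aux_norm_two]
        norm_num
      show φ _ = 1
      simp [hφ, hP2]
  have hker : (zsmulAddGroupHom 2 : A →+ A).range = Φ.ker := by
    ext a
    simp only [AddMonoidHom.mem_range, AddMonoidHom.mem_ker]
    constructor
    · rintro ⟨b, rfl⟩
      have h2b : (zsmulAddGroupHom 2 : A →+ A) b = b + b := by
        simp [zsmulAddGroupHom_apply, two_zsmul]
      rw [h2b]
      have hPbb : P (b + b) := by
        rw [hPsum b b]
        have : (e b : ℤ_[2]) + (e b : ℤ_[2]) = 2 * (e b : ℤ_[2]) := (two_mul _).symm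
        rw [this, norm_mul, aux_norm_two]
        calc (2⁻¹ : ℝ) * ‖(e b : ℤ_[2])‖ ≤ 2⁻¹ * 2⁻¹ :=
              mul_le_mul_of_nonneg_left (hEa b) (by norm_num)
          _ = 4⁻¹ := by norm_num
      show φ (b + b) = 0
      simp [hφ, hPbb]
    · intro h
      have hPa : P a := by
        by_contra hn
        have : φ a = 1 := by simp [hφ, hn]
        rw [show Φ a = φ a from rfl, this] at h
        exact absurd h (by decide)
      obtain ⟨x, hx1, hx2⟩ := exists_halving F c hsum hF h00 h10 h01 h11 hx hy (e a : ℤ_[2]) hPa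
      refine ⟨e.symm ⟨x, hx1⟩, ?_⟩
      have hco : (e (e.symm ⟨x, hx1⟩ + e.symm ⟨x, hx1⟩) : ℤ_[2]) = (e a : ℤ_[2]) := by
        rw [he]
        rw [Equiv.apply_symm_apply]
        exact hx2
      have heq : e (e.symm ⟨x, hx1⟩ + e.symm ⟨x, hx1⟩) = e a := Subtype.ext hco
      have : e.symm ⟨x, hx1⟩ + e.symm ⟨x, hx1⟩ = a := e.injective heq
      rw [← this]
      simp [zsmulAddGroupHom_apply, two_zsmul]
  exact ⟨(QuotientAddGroup.quotientAddEquivOfEq hker).trans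
    (QuotientAddGroup.quotientKerEquivOfSurjective Φ hsurj)⟩
end
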